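/- For n ≥ 2, let L_n = ker(δ_n) ⊂ S^n(ℝ^{m*}) ⊗ S^2(ℝ^{m*}), where δ_n(f ⊗ q) = ∑_i f·z^i ⊗ ∂q/∂u^i. Then for every h_n ∈ S^n(ℝ^{m*}) ⊗ S^2(ℝ^{m*}) there exists a unique g ∈ S^{n+1}(ℝ^{m*}) ⊗ ℝ^m such that −2 ∑_{i,j} (∂g_i/∂z^j)(z) ⊗ u^i u^j + h_n lies in L_n (writing g = ∑_i g_i(z) e_i). -/

import Mathlib

open MvPolynomial

open Finsupp

namespace UniqueNormAux

variable {m : ℕ}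

lemma degree_eq_sum_univ (d : Fin m →₀ ℕ) : d.degree = ∑ i, d i :=
  Finset.sum_subset (Finset.subset_univ _)
    (fun i _ hi => Finsupp.notMem_support_iff.mp hi)

lemma euler_monomial (d : Fin m →₀ ℕ) (a : ℝ) :
    ∑ i, X i * pderiv i (monomial d a) = d.degree • (monomial d a : MvPolynomial (Fin m) ℝ) := by
  have key : ∀ i : Fin m, X i * pderiv i (monomial d a)
      = d i • (monomial d a : MvPolynomial (Fin m) ℝ) := by
    intro i
    rw [pderiv_monomial]
    rcases Nat.eq_zero_or_pos (d i) with h | h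
    · simp [h]
    · have hd' : Finsupp.single i 1 + (d - Finsupp.single i 1) = d := by
        ext j
        rcases eq_or_ne i j with rfl | hij
        · simp only [Finsupp.add_apply, Finsupp.tsub_apply, Finsupp.single_eq_same]
          omega
        · simp [Finsupp.add_apply, Finsupp.tsub_apply, Finsupp.single_eq_of_ne' hij]
      have hmul : (X i : MvPolynomial (Fin m) ℝ) * monomial (d - Finsupp.single i 1) (a * (d i : ℝ))
          = monomial d (a * (d i : ℝ)) := by
        rw [X, monomial_mul, one_mul, hd']
      rw [hmul, smul_monomial]
      congr 1
      rw [nsmul_eq_mul]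
      ring
  simp_rw [key, ← Finset.sum_smul, ← degree_eq_sum_univ]

lemma euler {n : ℕ} {p : MvPolynomial (Fin m) ℝ} (hp : p.IsHomogeneous n) :
    ∑ i, X i * pderiv i p = n • p := by
  calc ∑ i, X i * pderiv i p
      = ∑ i, X i * pderiv i (∑ d ∈ p.support, monomial d (coeff d p)) := by rw [← p.as_sum]
    _ = ∑ i : Fin m, ∑ d ∈ p.support, X i * pderiv i (monomial d (coeff d p)) := by
        simp_rw [map_sum, Finset.mul_sum]
    _ = ∑ d ∈ p.support, ∑ i : Fin m, X i * pderiv i (monomial d (coeff d p)) :=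
        Finset.sum_comm
    _ = ∑ d ∈ p.support, n • monomial d (coeff d p) := by
        refine Finset.sum_congr rfl fun d hd => ?_
        rw [euler_monomial]
        congr 1
        rw [degree_eq_weight_one]
        exact hp (MvPolynomial.mem_support_iff.mp hd)
    _ = n • p := by rw [← Finset.smul_sum, ← p.as_sum]

lemma pderiv_isHomogeneous {n : ℕ} {p : MvPolynomial (Fin m) ℝ} (i : Fin m)
    (hp : p.IsHomogeneous (n + 1)) : (pderiv i p).IsHomogeneous n := by
  rw [p.as_sum, map_sum]
  apply IsHomogeneous.sum
  intro d hd
  rw [pderiv_monomial]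
  rcases Nat.eq_zero_or_pos (d i) with h | h
  · simp only [h, Nat.cast_zero, mul_zero]
    rw [show (monomial (d - Finsupp.single i 1)) (0:ℝ) = 0 from monomial_zero]
    exact isHomogeneous_zero _ _ _
  · apply isHomogeneous_monomial
    have hdeg : d.degree = n + 1 := by
      rw [degree_eq_weight_one]; exact hp (MvPolynomial.mem_support_iff.mp hd)
    rw [degree_eq_sum_univ] at hdeg ⊢
    rw [← Finset.add_sum_erase _ _ (Finset.mem_univ i)] at hdeg ⊢
    have h1 : ((d - Finsupp.single i 1) : Fin m →₀ ℕ) i = d i - 1 := by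
      rw [Finsupp.tsub_apply, Finsupp.single_eq_same]
    have h2 : ∑ j ∈ Finset.univ.erase i, ((d - Finsupp.single i 1) : Fin m →₀ ℕ) j
        = ∑ j ∈ Finset.univ.erase i, d j := by
      refine Finset.sum_congr rfl fun j hj => ?_
      rw [Finsupp.tsub_apply, Finsupp.single_eq_of_ne' (Finset.ne_of_mem_erase hj).symm]
      simp
    rw [h1, h2]
    omega

/-- pderiv of ∑ X i * p i -/
lemma pderiv_sum_X_mul (p : Fin m → MvPolynomial (Fin m) ℝ) (j : Fin m) :
    pderiv j (∑ i, X i * p i) = p j + ∑ i, X i * pderiv j (p i) := by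
  rw [map_sum]
  simp_rw [pderiv_mul]
  rw [Finset.sum_add_distrib]
  congr 1
  rw [Finset.sum_eq_single j]
  · simp
  · intro i _ hij
    rw [pderiv_X_of_ne hij, zero_mul]
  · intro hj; exact absurd (Finset.mem_univ j) hj

end UniqueNormAux

namespace More
open UniqueNormAux

variable {m : ℕ}

lemma smul_isHomogeneous {n : ℕ} (a : ℝ) {p : MvPolynomial (Fin m) ℝ}
    (hp : p.IsHomogeneous n) : (a • p).IsHomogeneous n := by
  rw [smul_eq_C_mul]
  simpa using (isHomogeneous_C _ a).mul hp

lemma nsmul_eq_zero {k : ℕ} (hk : k ≠ 0) {p : MvPolynomial (Fin m) ℝ}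
    (h : k • p = 0) : p = 0 := by
  rw [← Nat.cast_smul_eq_nsmul ℝ, smul_eq_C_mul] at h
  rcases mul_eq_zero.mp h with h' | h'
  · rw [C_eq_zero] at h'
    exact absurd h' (Nat.cast_ne_zero.mpr hk)
  · exact h'

lemma key_id {n : ℕ} (g : Fin m → MvPolynomial (Fin m) ℝ)
    (hg : ∀ i, (g i).IsHomogeneous (n + 1)) (j : Fin m) :
    ∑ i, (pderiv j (g i) + pderiv i (g j)) * X i
      = pderiv j (∑ i, X i * g i) + n • g j := by
  have e1 : ∑ i, pderiv j (g i) * X i = pderiv j (∑ i, X i * g i) - g j := by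
    rw [pderiv_sum_X_mul, add_sub_cancel_left]
    exact Finset.sum_congr rfl fun i _ => mul_comm _ _
  have e2 : ∑ i, pderiv i (g j) * X i = (n + 1) • g j := by
    rw [← euler (hg j)]
    exact Finset.sum_congr rfl fun i _ => mul_comm _ _
  simp_rw [add_mul]
  rw [Finset.sum_add_distrib, e1, e2, succ_nsmul]
  ring

lemma sum_X_mul_isHomogeneous {n : ℕ} (d : Fin m → MvPolynomial (Fin m) ℝ)
    (hd : ∀ i, (d i).IsHomogeneous (n + 1)) :
    (∑ i, X i * d i).IsHomogeneous (n + 2) := by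
  apply IsHomogeneous.sum
  intro i _
  have := (isHomogeneous_X ℝ i).mul (hd i)
  rwa [show 1 + (n + 1) = n + 2 by omega] at this

lemma uniq_aux {n : ℕ} (hn : 2 ≤ n) (d : Fin m → MvPolynomial (Fin m) ℝ)
    (hd : ∀ i, (d i).IsHomogeneous (n + 1))
    (heq : ∀ j, ∑ i, (pderiv j (d i) + pderiv i (d j)) * X i = 0) : ∀ j, d j = 0 := by
  have hDhom := sum_X_mul_isHomogeneous d hd
  have key : ∀ j, pderiv j (∑ i, X i * d i) + n • d j = 0 := by
    intro j
    rw [← key_id d hd j, heq j]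
  have hD : (∑ i, X i * d i) = 0 := by
    have hsum : ∑ j, X j * (pderiv j (∑ i, X i * d i) + n • d j) = 0 := by
      simp_rw [key, mul_zero, Finset.sum_const_zero]
    have hkey : (n + 2) • (∑ i, X i * d i) + n • (∑ i, X i * d i) = 0 := by
      rw [← euler hDhom, ← hsum]
      simp_rw [mul_add, Finset.sum_add_distrib, mul_smul_comm, ← Finset.smul_sum]
    rw [← add_nsmul] at hkey
    exact nsmul_eq_zero (by omega) hkey
  intro j
  have hj := key j
  rw [hD] at hj
  simp only [map_zero, zero_add] at hj
  exact nsmul_eq_zero (by omega) hj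

end More


open UniqueNormAux More

/-- Let `Lₙ = ker δₙ ⊂ Sⁿ(ℝ^{m*}) ⊗ S²(ℝ^{m*})`, with
`δₙ(f ⊗ q) = ∑_i f·z^i ⊗ ∂q/∂u^i`.  For every `hₙ` (a symmetric matrix `h i j` of
homogeneous degree-`n` polynomials, the coefficients of `u^i u^j`) there is a unique
`g ∈ S^{n+1}(ℝ^{m*}) ⊗ ℝ^m` (components `g i`) such that
`−2 ∑_{i,j} (∂g_i/∂z^j) ⊗ u^i u^j + hₙ ∈ Lₙ`.  The quadratic form
`−2∑ (∂g_i/∂z^j) u^i u^j` has symmetric matrix `M i j = −(∂g_i/∂z^j + ∂g_j/∂z^i)`, and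
membership of `M + hₙ` in `Lₙ = ker δₙ` reads
`∀ j, ∑_i ((M+h) i j + (M+h) j i)·z^i = 0`. -/
theorem unique_normalization_metric_jet (m n : ℕ) (hn : 2 ≤ n) :
    ∀ h : Fin m → Fin m → MvPolynomial (Fin m) ℝ,
      (∀ i j, (h i j).IsHomogeneous n) → (∀ i j, h i j = h j i) →
      ∃! g : {g : Fin m → MvPolynomial (Fin m) ℝ // ∀ i, (g i).IsHomogeneous (n + 1)},
        ∀ j, ∑ i,
            (((-(pderiv j (g.1 i) + pderiv i (g.1 j)) + h i j)
              + (-(pderiv i (g.1 j) + pderiv j (g.1 i)) + h j i)) * X i) = 0 := by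
  intro h hhom hsym
  set H : Fin m → MvPolynomial (Fin m) ℝ := fun j => ∑ i, X i * h i j with hHdef
  have hHhom : ∀ j, (H j).IsHomogeneous (n + 1) := by
    intro j
    apply IsHomogeneous.sum
    intro i _
    have := (isHomogeneous_X ℝ i).mul (hhom i j)
    rwa [show 1 + n = n + 1 by omega] at this
  set Q : MvPolynomial (Fin m) ℝ := ∑ j, X j * H j with hQdef
  have hQhom : Q.IsHomogeneous (n + 2) := sum_X_mul_isHomogeneous H hHhom
  have hnR : ((n : ℝ)) ≠ 0 := Nat.cast_ne_zero.mpr (by omega)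
  have hcden : (2 * (n : ℝ) + 2) ≠ 0 := by positivity
  set c : ℝ := (2 * (n : ℝ) + 2)⁻¹ with hcdef
  set g0 : Fin m → MvPolynomial (Fin m) ℝ :=
    fun j => (n : ℝ)⁻¹ • (H j - c • pderiv j Q) with hg0def
  have hg0hom : ∀ j, (g0 j).IsHomogeneous (n + 1) := by
    intro j
    apply smul_isHomogeneous
    exact (hHhom j).sub (smul_isHomogeneous c (pderiv_isHomogeneous j hQhom))
  have hG : (∑ i, X i * g0 i) = c • Q := by
    have hXQ : ∑ i, X i * pderiv i Q = (n + 2) • Q := euler hQhom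
    calc ∑ i, X i * g0 i
        = (n : ℝ)⁻¹ • ((∑ i, X i * H i) - c • (∑ i, X i * pderiv i Q)) := by
          simp_rw [hg0def, mul_smul_comm, mul_sub, smul_sub, Finset.sum_sub_distrib,
            ← Finset.smul_sum]
          refine congrArg (_ - ·) (congrArg ((n : ℝ)⁻¹ • ·) ?_)
          rw [Finset.smul_sum]
          exact Finset.sum_congr rfl fun i _ => mul_smul_comm _ _ _
      _ = (n : ℝ)⁻¹ • (Q - c • ((n + 2) • Q)) := by rw [← hQdef, hXQ]
      _ = c • Q := by
          rw [← Nat.cast_smul_eq_nsmul ℝ, smul_smul,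
            show Q - (c * ((n + 2 : ℕ) : ℝ)) • Q = (1 - c * ((n + 2 : ℕ) : ℝ)) • Q by
              rw [sub_smul, one_smul],
            smul_smul]
          congr 1
          rw [hcdef]
          push_cast
          have h1 : (1:ℝ) - (2*(n:ℝ)+2)⁻¹ * ((n:ℝ)+2) = (n:ℝ) * (2*(n:ℝ)+2)⁻¹ := by
            rw [sub_eq_iff_eq_add, ← mul_comm ((2*(n:ℝ)+2)⁻¹), ← mul_add, inv_mul_eq_div, eq_comm,
              div_eq_one_iff_eq hcden]
            ring
          rw [h1, ← mul_assoc, inv_mul_cancel₀ hnR, one_mul]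
  have hE : ∀ j, ∑ i, (pderiv j (g0 i) + pderiv i (g0 j)) * X i = ∑ i, h i j * X i := by
    intro j
    rw [key_id g0 hg0hom j, hG]
    have h1 : pderiv j (c • Q) = c • pderiv j Q := Derivation.map_smul _ _ _
    have h2 : (n : ℕ) • g0 j = (n : ℝ) • g0 j := (Nat.cast_smul_eq_nsmul ℝ n _).symm
    have h3 : (H j) = ∑ i, h i j * X i := by
      rw [hHdef]; exact Finset.sum_congr rfl fun i _ => mul_comm _ _
    rw [h1, h2, hg0def]
    simp only []
    rw [smul_smul, show (n : ℝ) * (n : ℝ)⁻¹ = 1 by field_simp, one_smul, ← h3]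
    abel
  have hmain : ∀ j, ∑ i,
      (((-(pderiv j (g0 i) + pderiv i (g0 j)) + h i j)
        + (-(pderiv i (g0 j) + pderiv j (g0 i)) + h j i)) * X i) = 0 := by
    intro j
    have expand : ∀ i : Fin m, ((-(pderiv j (g0 i) + pderiv i (g0 j)) + h i j)
          + (-(pderiv i (g0 j) + pderiv j (g0 i)) + h j i)) * X i
        = 2 * (h i j * X i) - 2 * ((pderiv j (g0 i) + pderiv i (g0 j)) * X i) := by
      intro i; rw [hsym j i]; ring
    rw [Finset.sum_congr rfl fun i _ => expand i, Finset.sum_sub_distrib,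
      ← Finset.mul_sum, ← Finset.mul_sum, hE j, sub_self]
  have htwo : (2 : MvPolynomial (Fin m) ℝ) ≠ 0 := two_ne_zero
  refine ⟨⟨g0, hg0hom⟩, hmain, ?_⟩
  rintro ⟨g1, hg1⟩ hprop
  have hE1 : ∀ j, ∑ i, (pderiv j (g1 i) + pderiv i (g1 j)) * X i = ∑ i, h i j * X i := by
    intro j
    have hp := hprop j
    have expand : ∀ i : Fin m, ((-(pderiv j (g1 i) + pderiv i (g1 j)) + h i j)
          + (-(pderiv i (g1 j) + pderiv j (g1 i)) + h j i)) * X i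
        = 2 * (h i j * X i) - 2 * ((pderiv j (g1 i) + pderiv i (g1 j)) * X i) := by
      intro i; rw [hsym j i]; ring
    rw [Finset.sum_congr rfl fun i _ => expand i, Finset.sum_sub_distrib,
      ← Finset.mul_sum, ← Finset.mul_sum, sub_eq_zero] at hp
    exact mul_left_cancel₀ htwo hp.symm
  have hd : ∀ i, ((g1 i - g0 i)).IsHomogeneous (n + 1) := fun i => (hg1 i).sub (hg0hom i)
  have heq0 : ∀ j, ∑ i, (pderiv j (g1 i - g0 i) + pderiv i (g1 j - g0 j)) * X i = 0 := by
    intro j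
    have expand : ∀ i : Fin m, (pderiv j (g1 i - g0 i) + pderiv i (g1 j - g0 j)) * X i
        = (pderiv j (g1 i) + pderiv i (g1 j)) * X i
          - (pderiv j (g0 i) + pderiv i (g0 j)) * X i := by
      intro i; rw [map_sub, map_sub]; ring
    rw [Finset.sum_congr rfl fun i _ => expand i, Finset.sum_sub_distrib, hE1 j, hE j, sub_self]
  have hzero := uniq_aux hn _ hd heq0
  apply Subtype.ext
  funext j
  exact sub_eq_zero.mp (hzero j)
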